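/- For all integers n ≥ 1 and k with 2k ≥ n + 1 and k ≤ n, the number of flattened Catalan words of length n with exactly k runs of descents equals 2^(2k − n − 1) · C(n − 1, 2(n − k)), where C denotes the binomial coefficient; and this number is 0 when 2k < n + 1. -/

import Mathlib

/-- `w : ℕ → ℕ` encodes a Catalan word of length `n` (0-indexed letters
`w 0, w 1, …, w (n-1)`): the first letter is `0`, each letter is at most the
previous one plus one, and `w` is normalized to vanish at positions `≥ n`. -/
def IsCatalanWord (n : ℕ) (w : ℕ → ℕ) : Prop :=
  w 0 = 0 ∧ (∀ i, i + 1 < n → w (i + 1) ≤ w i + 1) ∧ ∀ i, n ≤ i → w i = 0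

/-- `j` is the starting position of one of the maximal weakly increasing
contiguous subwords (runs of weak ascents) of the length-`n` word `w`. -/
def IsRunStart (n : ℕ) (w : ℕ → ℕ) (j : ℕ) : Prop :=
  j < n ∧ (j = 0 ∨ w j < w (j - 1))

/-- A word is flattened when the leading terms of its maximal weakly increasing
contiguous subwords, read from left to right, form a weakly increasing sequence. -/
def IsFlattened (n : ℕ) (w : ℕ → ℕ) : Prop :=
  ∀ i j, IsRunStart n w i → IsRunStart n w j → i ≤ j → w i ≤ w j

/-- The set of flattened Catalan words of length `n`. -/
def FlatCat (n : ℕ) : Set (ℕ → ℕ) := {w | IsCatalanWord n w ∧ IsFlattened n w}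

/-- Number of maximal strictly increasing contiguous subwords (runs of ascents):
`1 + #{ i : w_i ≥ w_{i+1} }`. -/
noncomputable def runsAsc (n : ℕ) (w : ℕ → ℕ) : ℕ :=
  1 + {i : ℕ | i + 1 < n ∧ w (i + 1) ≤ w i}.ncard

/-- Number of maximal weakly increasing contiguous subwords (runs of weak
ascents): `1 + #{ i : w_i > w_{i+1} }`. -/
noncomputable def wruns (n : ℕ) (w : ℕ → ℕ) : ℕ :=
  1 + {i : ℕ | i + 1 < n ∧ w (i + 1) < w i}.ncard

/-- Number of maximal strictly decreasing contiguous subwords (runs of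
descents): `1 + #{ i : w_i ≤ w_{i+1} }`. -/
noncomputable def runsDesc (n : ℕ) (w : ℕ → ℕ) : ℕ :=
  1 + {i : ℕ | i + 1 < n ∧ w i ≤ w (i + 1)}.ncard

/-- Number of maximal weakly decreasing contiguous subwords (runs of weak
descents): `1 + #{ i : w_i < w_{i+1} }`. -/
noncomputable def wrunsDesc (n : ℕ) (w : ℕ → ℕ) : ℕ :=
  1 + {i : ℕ | i + 1 < n ∧ w i < w (i + 1)}.ncard

/-- An `ℓ`-valley `a b^ℓ (b+1)` (with `a > b`) occurring at position `i` of the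
length-`n` word `w`. -/
def IsLValley (n : ℕ) (w : ℕ → ℕ) (ℓ i : ℕ) : Prop :=
  i + ℓ + 1 < n ∧ w (i + 1) < w i ∧ (∀ t, 1 ≤ t → t ≤ ℓ → w (i + t) = w (i + 1)) ∧
    w (i + ℓ + 1) = w (i + 1) + 1

/-- Number of `ℓ`-valleys of `w`. -/
noncomputable def lValleyCount (n : ℕ) (w : ℕ → ℕ) (ℓ : ℕ) : ℕ :=
  {i : ℕ | IsLValley n w ℓ i}.ncard

/-- Number of valleys of `w` (all `ℓ`-valleys, `ℓ ≥ 1`). -/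
noncomputable def valleyCount (n : ℕ) (w : ℕ → ℕ) : ℕ :=
  {p : ℕ × ℕ | 1 ≤ p.2 ∧ IsLValley n w p.2 p.1}.ncard

/-- A symmetric valley `a (a-1)^ℓ a` (with `ℓ ≥ 1`) occurring at position `i`. -/
def IsSymValley (n : ℕ) (w : ℕ → ℕ) (ℓ i : ℕ) : Prop :=
  i + ℓ + 1 < n ∧ w i = w (i + 1) + 1 ∧ (∀ t, 1 ≤ t → t ≤ ℓ → w (i + t) = w (i + 1)) ∧
    w (i + ℓ + 1) = w i

/-- Number of symmetric valleys of `w` (over all `ℓ ≥ 1`). -/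
noncomputable def symValleyCount (n : ℕ) (w : ℕ → ℕ) : ℕ :=
  {p : ℕ × ℕ | 1 ≤ p.2 ∧ IsSymValley n w p.2 p.1}.ncard

/-- An `ℓ`-peak `a (a+1)^ℓ b` (with `a ≥ b`) occurring at position `i` of the
length-`n` word `w`. -/
def IsLPeak (n : ℕ) (w : ℕ → ℕ) (ℓ i : ℕ) : Prop :=
  i + ℓ + 1 < n ∧ (∀ t, 1 ≤ t → t ≤ ℓ → w (i + t) = w i + 1) ∧ w (i + ℓ + 1) ≤ w i

/-- Number of `ℓ`-peaks of `w`. -/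
noncomputable def lPeakCount (n : ℕ) (w : ℕ → ℕ) (ℓ : ℕ) : ℕ :=
  {i : ℕ | IsLPeak n w ℓ i}.ncard

/-- Number of peaks of `w` (all `ℓ`-peaks, `ℓ ≥ 1`). -/
noncomputable def peakCount (n : ℕ) (w : ℕ → ℕ) : ℕ :=
  {p : ℕ × ℕ | 1 ≤ p.2 ∧ IsLPeak n w p.2 p.1}.ncard

/-- A symmetric peak `a (a+1)^ℓ a` (with `ℓ ≥ 1`) occurring at position `i`. -/
def IsSymPeak (n : ℕ) (w : ℕ → ℕ) (ℓ i : ℕ) : Prop :=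
  i + ℓ + 1 < n ∧ (∀ t, 1 ≤ t → t ≤ ℓ → w (i + t) = w i + 1) ∧ w (i + ℓ + 1) = w i

/-- Number of symmetric peaks of `w` (over all `ℓ ≥ 1`). -/
noncomputable def symPeakCount (n : ℕ) (w : ℕ → ℕ) : ℕ :=
  {p : ℕ × ℕ | 1 ≤ p.2 ∧ IsSymPeak n w p.2 p.1}.ncard


open Finset

namespace FCW

/-- number of special gaps (code value 2) before position `i` -/
def rk (c : ℕ → ℕ) (i : ℕ) : ℕ := ((range i).filter fun j => c j = 2).card

def stepPair (c : ℕ → ℕ) : ℕ → ℕ × ℕ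
  | 0 => (0, 0)
  | i + 1 =>
    if c i = 2 then
      if Even (rk c i) then ((stepPair c i).1 + 1, (stepPair c i).1)
      else ((stepPair c i).2, (stepPair c i).2)
    else if c i = 1 then ((stepPair c i).1 + 1, (stepPair c i).2)
    else stepPair c i

def bw (c : ℕ → ℕ) (i : ℕ) : ℕ := (stepPair c i).1
def bb (c : ℕ → ℕ) (i : ℕ) : ℕ := (stepPair c i).2

lemma rk_zero (c : ℕ → ℕ) : rk c 0 = 0 := by simp [rk]

lemma rk_succ (c : ℕ → ℕ) (i : ℕ) :
    rk c (i + 1) = if c i = 2 then rk c i + 1 else rk c i := by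
  unfold rk
  rw [range_add_one, filter_insert]
  split <;> simp [Finset.card_insert_of_notMem]

lemma rk_mono (c : ℕ → ℕ) {i j : ℕ} (h : i ≤ j) : rk c i ≤ rk c j :=
  Finset.card_le_card (Finset.filter_subset_filter _ (by simpa using Finset.range_subset_range.2 h))

lemma rk_const (c : ℕ → ℕ) {a b : ℕ} (h : a ≤ b)
    (hns : ∀ t, a ≤ t → t < b → c t ≠ 2) : rk c b = rk c a := by
  induction b with
  | zero => obtain rfl : a = 0 := Nat.le_zero.1 h; rfl
  | succ b ih =>
    rcases Nat.eq_or_lt_of_le h with h' | h'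
    · rw [h']
    · have hb : a ≤ b := by omega
      rw [rk_succ, if_neg (hns b hb (by omega)), ih hb (fun t ht ht' => hns t ht (by omega))]

lemma bw_zero (c : ℕ → ℕ) : bw c 0 = 0 := rfl
lemma bb_zero (c : ℕ → ℕ) : bb c 0 = 0 := rfl

lemma step_spec_even (c : ℕ → ℕ) {i : ℕ} (h2 : c i = 2) (he : Even (rk c i)) :
    bw c (i + 1) = bw c i + 1 ∧ bb c (i + 1) = bw c i := by
  unfold bw bb; rw [stepPair]; simp [h2, he]

lemma step_spec_odd (c : ℕ → ℕ) {i : ℕ} (h2 : c i = 2) (ho : Odd (rk c i)) :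
    bw c (i + 1) = bb c i ∧ bb c (i + 1) = bb c i := by
  unfold bw bb; rw [stepPair]; simp [h2, Nat.not_even_iff_odd.2 ho]

lemma step_one (c : ℕ → ℕ) {i : ℕ} (h2 : c i ≠ 2) (h1 : c i = 1) :
    bw c (i + 1) = bw c i + 1 ∧ bb c (i + 1) = bb c i := by
  unfold bw bb; rw [stepPair]; simp [h2, h1]

lemma step_zero (c : ℕ → ℕ) {i : ℕ} (h2 : c i ≠ 2) (h1 : c i ≠ 1) :
    bw c (i + 1) = bw c i ∧ bb c (i + 1) = bb c i := by
  unfold bw bb; rw [stepPair]; simp [h2, h1]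

lemma bb_le_bw (c : ℕ → ℕ) (i : ℕ) : bb c i ≤ bw c i := by
  induction i with
  | zero => simp [bb_zero, bw_zero]
  | succ i ih =>
    by_cases h2 : c i = 2
    · by_cases he : Even (rk c i)
      · obtain ⟨e1, e2⟩ := step_spec_even c h2 he; omega
      · obtain ⟨e1, e2⟩ := step_spec_odd c h2 (Nat.not_even_iff_odd.1 he); omega
    · by_cases h1 : c i = 1
      · obtain ⟨e1, e2⟩ := step_one c h2 h1; omega
      · obtain ⟨e1, e2⟩ := step_zero c h2 h1; omega

lemma bb_mono_succ (c : ℕ → ℕ) (i : ℕ) : bb c i ≤ bb c (i + 1) := by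
  by_cases h2 : c i = 2
  · by_cases he : Even (rk c i)
    · obtain ⟨e1, e2⟩ := step_spec_even c h2 he; have := bb_le_bw c i; omega
    · obtain ⟨e1, e2⟩ := step_spec_odd c h2 (Nat.not_even_iff_odd.1 he); omega
  · by_cases h1 : c i = 1
    · obtain ⟨e1, e2⟩ := step_one c h2 h1; omega
    · obtain ⟨e1, e2⟩ := step_zero c h2 h1; omega

lemma bb_mono (c : ℕ → ℕ) {i j : ℕ} (h : i ≤ j) : bb c i ≤ bb c j := by
  induction j with
  | zero => obtain rfl : i = 0 := Nat.le_zero.1 h; exact le_rfl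
  | succ j ih =>
    rcases Nat.eq_or_lt_of_le h with h' | h'
    · rw [h']
    · exact le_trans (ih (by omega)) (bb_mono_succ c j)

lemma bb_lt_bw_of_odd (c : ℕ → ℕ) {i : ℕ} (ho : Odd (rk c i)) : bb c i < bw c i := by
  induction i with
  | zero => simp [rk_zero] at ho
  | succ i ih =>
    have hrs := rk_succ c i
    by_cases h2 : c i = 2
    · rw [if_pos h2] at hrs
      by_cases he : Even (rk c i)
      · obtain ⟨e1, e2⟩ := step_spec_even c h2 he; omega
      · exfalso
        have : Odd (rk c i) := Nat.not_even_iff_odd.1 he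
        rw [hrs] at ho
        rcases this with ⟨m, hm⟩; rcases ho with ⟨m', hm'⟩; omega
    · rw [if_neg h2] at hrs
      have hoi : Odd (rk c i) := hrs ▸ ho
      by_cases h1 : c i = 1
      · obtain ⟨e1, e2⟩ := step_one c h2 h1; have := ih hoi; omega
      · obtain ⟨e1, e2⟩ := step_zero c h2 h1; have := ih hoi; omega

/-- Catalan step condition for the built word. -/
lemma bw_step_le (c : ℕ → ℕ) (i : ℕ) : bw c (i + 1) ≤ bw c i + 1 := by
  by_cases h2 : c i = 2
  · by_cases he : Even (rk c i)
    · obtain ⟨e1, _⟩ := step_spec_even c h2 he; omega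
    · obtain ⟨e1, _⟩ := step_spec_odd c h2 (Nat.not_even_iff_odd.1 he)
      have := bb_le_bw c i; omega
  · by_cases h1 : c i = 1
    · obtain ⟨e1, _⟩ := step_one c h2 h1; omega
    · obtain ⟨e1, _⟩ := step_zero c h2 h1; omega

/-- the built word has a descent at gap `i` iff `c i = 2` with odd rank. -/
lemma bw_desc_iff (c : ℕ → ℕ) (i : ℕ) :
    bw c (i + 1) < bw c i ↔ (c i = 2 ∧ Odd (rk c i)) := by
  constructor
  · intro h
    by_cases h2 : c i = 2
    · by_cases he : Even (rk c i)
      · obtain ⟨e1, _⟩ := step_spec_even c h2 he; omega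
      · exact ⟨h2, Nat.not_even_iff_odd.1 he⟩
    · by_cases h1 : c i = 1
      · obtain ⟨e1, _⟩ := step_one c h2 h1; omega
      · obtain ⟨e1, _⟩ := step_zero c h2 h1; omega
  · rintro ⟨h2, ho⟩
    obtain ⟨e1, _⟩ := step_spec_odd c h2 ho
    have := bb_lt_bw_of_odd c ho; omega

lemma bw_mono_of_no_desc (c : ℕ → ℕ) {a b : ℕ} (h : a ≤ b)
    (hnd : ∀ t, a ≤ t → t < b → ¬(c t = 2 ∧ Odd (rk c t))) : bw c a ≤ bw c b := by
  induction b with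
  | zero => obtain rfl : a = 0 := Nat.le_zero.1 h; exact le_rfl
  | succ b ih =>
    rcases Nat.eq_or_lt_of_le h with h' | h'
    · rw [h']
    · have hab : a ≤ b := by omega
      have h1 : bw c a ≤ bw c b := ih hab (fun t ht ht' => hnd t ht (by omega))
      have h2 : ¬ (bw c (b+1) < bw c b) := fun hc => hnd b hab (by omega) ((bw_desc_iff c b).1 hc)
      omega

lemma bb_const_of_no_spec (c : ℕ → ℕ) {a b : ℕ} (h : a ≤ b)
    (hns : ∀ t, a ≤ t → t < b → c t ≠ 2) : bb c b = bb c a := by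
  induction b with
  | zero => obtain rfl : a = 0 := Nat.le_zero.1 h; rfl
  | succ b ih =>
    rcases Nat.eq_or_lt_of_le h with h' | h'
    · rw [h']
    · have hab : a ≤ b := by omega
      have h2 := hns b hab (by omega)
      have := ih hab (fun t ht ht' => hns t ht (by omega))
      by_cases h1 : c b = 1
      · obtain ⟨_, e2⟩ := step_one c h2 h1; omega
      · obtain ⟨_, e2⟩ := step_zero c h2 h1; omega

/-- The set of valid codes: values `≤ 2` on `[0,N)`, zero elsewhere, with
exactly `r` special positions. -/
def Codes (N r : ℕ) : Set (ℕ → ℕ) :=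
  {c | (∀ i, i < N → c i ≤ 2) ∧ (∀ i, N ≤ i → c i = 0) ∧
    ((range N).filter fun i => c i = 2).card = r}

/-- the word built from a code -/
def wd (n : ℕ) (c : ℕ → ℕ) : ℕ → ℕ := fun i => if i < n then bw c i else 0

lemma ncard_setOf (n : ℕ) (P : ℕ → Prop) [DecidablePred P] :
    {i : ℕ | i + 1 < n ∧ P i}.ncard = ((Finset.range (n - 1)).filter P).card := by
  rw [← Set.ncard_coe_finset]
  congr 1
  ext i
  simp only [Finset.coe_filter, Finset.mem_range, Set.mem_setOf_eq, Finset.mem_coe]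
  constructor
  · rintro ⟨h1, h2⟩; exact ⟨by omega, h2⟩
  · rintro ⟨h1, h2⟩; exact ⟨by omega, h2⟩

/-- parity counting: the number of odd-rank specials is half the number of specials -/
lemma odd_spec_count (c : ℕ → ℕ) (M : ℕ) :
    ((range M).filter fun i => c i = 2 ∧ Odd (rk c i)).card
      = ((range M).filter fun i => c i = 2).card / 2 := by
  induction M with
  | zero => simp
  | succ M ih =>
    have hrk : rk c M = ((range M).filter fun i => c i = 2).card := rfl
    rw [range_add_one, filter_insert, filter_insert]
    by_cases h2 : c M = 2
    · by_cases ho : Odd (rk c M)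
      · rw [if_pos ⟨h2, ho⟩, if_pos h2,
          Finset.card_insert_of_notMem (by simp), Finset.card_insert_of_notMem (by simp)]
        have := Nat.odd_iff.1 ho
        omega
      · rw [if_neg (fun hc => ho hc.2), if_pos h2,
          Finset.card_insert_of_notMem (by simp)]
        have : rk c M % 2 = 0 := Nat.even_iff.1 (Nat.not_odd_iff_even.1 ho)
        omega
    · rw [if_neg (fun hc => h2 hc.1), if_neg h2]
      exact ih

section CodeToWord

variable {n k d : ℕ} {c : ℕ → ℕ}

lemma wd_lt (hn : 1 ≤ n) {i : ℕ} (hi : i < n) : wd n c i = bw c i := if_pos hi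

lemma wd_isCatalan (hn : 1 ≤ n) : IsCatalanWord n (wd n c) := by
  refine ⟨?_, ?_, ?_⟩
  · rw [wd, if_pos (by omega)]; rfl
  · intro i hi
    rw [wd, wd, if_pos hi, if_pos (by omega)]
    exact bw_step_le c i
  · intro i hi
    rw [wd, if_neg (by omega)]

lemma wd_isFlattened (hn : 1 ≤ n) : IsFlattened n (wd n c) := by
  have key : ∀ t, IsRunStart n (wd n c) t → bw c t = bb c t := by
    rintro t ⟨ht, h0 | hd⟩
    · subst h0; rfl
    · obtain ⟨t, rfl⟩ : ∃ s, t = s + 1 := ⟨t - 1, by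
        rcases Nat.eq_zero_or_pos t with h | h
        · subst h; simp [wd, if_pos (by omega : (0:ℕ) < n)] at hd
        · omega⟩
      simp only [Nat.add_sub_cancel] at hd
      rw [wd_lt hn ht, wd_lt hn (by omega)] at hd
      obtain ⟨h2, ho⟩ := (bw_desc_iff c t).1 hd
      obtain ⟨e1, e2⟩ := step_spec_odd c h2 ho
      omega
  rintro i j hi hj hij
  have hi' := hi.1
  have hj' := hj.1
  rw [wd_lt hn hi', wd_lt hn hj', key i hi, key j hj]
  exact bb_mono c hij

lemma wd_runsDesc (hn : 1 ≤ n) (hk : 1 ≤ k) (hkn : k ≤ n)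
    (hc : c ∈ Codes (n - 1) (2 * (n - k))) : runsDesc n (wd n c) = k := by
  obtain ⟨hle, hzero, hcard⟩ := hc
  have hdesc : ((range (n - 1)).filter fun i => wd n c (i + 1) < wd n c i).card = n - k := by
    have hcongr : ((range (n - 1)).filter fun i => wd n c (i + 1) < wd n c i)
        = (range (n - 1)).filter fun i => c i = 2 ∧ Odd (rk c i) := by
      apply Finset.filter_congr
      intro i hi
      rw [Finset.mem_range] at hi
      rw [wd_lt hn (by omega), wd_lt hn (by omega)]
      exact bw_desc_iff c i
    rw [hcongr, odd_spec_count, hcard]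
    omega
  have hsplit : ((range (n - 1)).filter fun i => wd n c i ≤ wd n c (i + 1)).card
      + ((range (n - 1)).filter fun i => wd n c (i + 1) < wd n c i).card = n - 1 := by
    have hneg : ((range (n - 1)).filter fun i => wd n c (i + 1) < wd n c i)
        = (range (n - 1)).filter fun i => ¬ (wd n c i ≤ wd n c (i + 1)) := by
      apply Finset.filter_congr; intro i _; exact Nat.not_le.symm
    rw [hneg, Finset.card_filter_add_card_filter_not, Finset.card_range]
  rw [runsDesc, ncard_setOf]
  omega

end CodeToWord

section WordToCode

/-- descent at gap `i` -/
def Dsc (n : ℕ) (w : ℕ → ℕ) (i : ℕ) : Prop := i + 1 < n ∧ w (i + 1) < w i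

/-- marked up-step at gap `i`: an up-step whose bottom value is the landing
value of the next descent -/
def Mrk (n : ℕ) (w : ℕ → ℕ) (i : ℕ) : Prop :=
  i + 1 < n ∧ w (i + 1) = w i + 1 ∧
    ∃ j, Dsc n w j ∧ i < j ∧ w (j + 1) = w i ∧ ∀ t, i < t → t < j → ¬ Dsc n w t

open Classical in
/-- the code of a word -/
noncomputable def cd (n : ℕ) (w : ℕ → ℕ) : ℕ → ℕ := fun i =>
  if Dsc n w i ∨ Mrk n w i then 2
  else if i + 1 < n ∧ w (i + 1) = w i + 1 then 1 else 0

variable {n : ℕ} {w : ℕ → ℕ}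

instance : DecidablePred (Dsc n w) := fun i => by unfold Dsc; infer_instance

lemma isRunStart_mk {j : ℕ} (h1 : j < n) (h2 : j = 0 ∨ w j < w (j - 1)) :
    IsRunStart n w j := ⟨h1, h2⟩

lemma dsc_not_mrk {i : ℕ} (hd : Dsc n w i) : ¬ Mrk n w i := by
  rintro ⟨_, h2, _⟩; obtain ⟨_, h1⟩ := hd; omega

lemma cd_eq_two_iff (i : ℕ) : cd n w i = 2 ↔ (Dsc n w i ∨ Mrk n w i) := by
  unfold cd
  split
  · simp_all
  · split <;> simp_all

lemma cd_values (i : ℕ) : cd n w i ≤ 2 := by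
  unfold cd; split; · omega
  split <;> omega

lemma cd_big (i : ℕ) (hi : n ≤ i + 1) : cd n w i = 0 := by
  unfold cd
  rw [if_neg, if_neg]
  · rintro ⟨h, _⟩; omega
  · rintro (⟨h, _⟩ | ⟨h, _⟩) <;> omega

lemma dsc_pos (hw0 : w 0 = 0) {j : ℕ} (hd : Dsc n w j) : 1 ≤ j := by
  rcases Nat.eq_zero_or_pos j with rfl | h
  · obtain ⟨_, h1⟩ := hd; omega
  · exact h

lemma w_mono (hw : IsCatalanWord n w) {a b : ℕ} (h : a ≤ b) (hb : b < n)
    (hnd : ∀ t, a ≤ t → t < b → ¬ Dsc n w t) : w a ≤ w b := by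
  induction b with
  | zero => obtain rfl : a = 0 := Nat.le_zero.1 h; exact le_rfl
  | succ b ih =>
    rcases Nat.eq_or_lt_of_le h with h' | h'
    · rw [h']
    · have hab : a ≤ b := by omega
      have h1 : w a ≤ w b := ih hab (by omega) (fun t ht ht' => hnd t ht (by omega))
      have h2 : ¬ (w (b + 1) < w b) := fun hc => hnd b hab (by omega) ⟨hb, hc⟩
      omega

/-- two up-steps with the same bottom value and no descent before a common
position `j` must coincide -/
lemma up_bottom_unique (hw : IsCatalanWord n w) {i i' j : ℕ}
    (hij : i < j) (hij' : i' < j) (hjn : j < n)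
    (hu : w (i + 1) = w i + 1) (hu' : w (i' + 1) = w i' + 1) (he : w i = w i')
    (hnd : ∀ t, i < t → t < j → ¬ Dsc n w t)
    (hnd' : ∀ t, i' < t → t < j → ¬ Dsc n w t) : i = i' := by
  have aux : ∀ a a' : ℕ, a < a' → a' < j → w (a + 1) = w a + 1 → w a = w a' →
      (∀ t, a < t → t < j → ¬ Dsc n w t) → False := by
    intro a a' haa haj hua hea hnda
    have : w (a + 1) ≤ w a' := w_mono hw (by omega) (by omega)
      (fun t ht ht' => hnda t (by omega) (by omega))
    omega
  rcases lt_trichotomy i i' with h | h | h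
  · exact absurd (aux i i' h hij' hu he hnd) not_false
  · exact h
  · exact absurd (aux i' i h hij hu' he.symm hnd') not_false

/-- every descent has a mark: an up-step from the level where the descent lands -/
lemma mark_exists (hw : IsCatalanWord n w) (hf : IsFlattened n w) {j : ℕ}
    (hj : Dsc n w j) :
    ∃ p, p < j ∧ w (p + 1) = w p + 1 ∧ w p = w (j + 1) ∧
      ∀ t, p < t → t < j → ¬ Dsc n w t := by
  obtain ⟨hw0, hcat, hnorm⟩ := hw
  have hjn : j + 1 < n := hj.1
  -- first produce a run start `a ≤ j` with no descents in `[a, j)`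
  obtain ⟨a, haj, ha, hand⟩ : ∃ a, a ≤ j ∧ IsRunStart n w a ∧
      ∀ t, a ≤ t → t < j → ¬ Dsc n w t := by
    by_cases hq : ∃ t, t < j ∧ Dsc n w t
    · obtain ⟨t0, ht0, hdt0⟩ := hq
      have hj1 : 1 ≤ j := by omega
      set q := Nat.findGreatest (fun t => Dsc n w t) (j - 1) with hqdef
      have hdq : Dsc n w q := Nat.findGreatest_spec (by omega : t0 ≤ j - 1) hdt0
      have hqj : q ≤ j - 1 := Nat.findGreatest_le _
      have hqmax : ∀ t, q < t → t < j → ¬ Dsc n w t := fun t h1 h2 =>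
        Nat.findGreatest_is_greatest h1 (by omega)
      refine ⟨q + 1, by omega, isRunStart_mk (by have := hdq.1; omega)
        (Or.inr (by simpa using hdq.2)), fun t ht ht' => hqmax t (by omega) ht'⟩
    · push_neg at hq
      exact ⟨0, by omega, isRunStart_mk (by omega) (Or.inl rfl), fun t _ ht' => hq t ht'⟩
  have hjn : j + 1 < n := hj.1
  have hbot : w a ≤ w (j + 1) := hf a (j + 1) ha
    (isRunStart_mk (by omega) (Or.inr (by simpa using hj.2))) (by omega)
  -- now find the last position in `[a, j]` whose value is `≤ w (j+1)`
  set s := w (j + 1) with hsdef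
  set p := Nat.findGreatest (fun t => a ≤ t ∧ w t ≤ s) j with hpdef
  have hPp' := Nat.findGreatest_spec (P := fun t => a ≤ t ∧ w t ≤ s) (n := j)
    (m := a) haj ⟨le_rfl, hbot⟩
  obtain ⟨hPa, hPs⟩ := hPp'
  have hPp : a ≤ p ∧ w p ≤ s := ⟨hPa, hPs⟩
  have hpj : p ≤ j := Nat.findGreatest_le _
  have hpj' : p < j := by
    rcases Nat.eq_or_lt_of_le hpj with h | h
    · exfalso; have := hj.2; rw [h] at hPp; omega
    · exact h
  have hmax : ¬ (a ≤ p + 1 ∧ w (p + 1) ≤ s) :=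
    Nat.findGreatest_is_greatest (P := fun t => a ≤ t ∧ w t ≤ s) (n := j)
      (by omega) (by omega)
  have hup : s < w (p + 1) := by
    by_contra hc; exact hmax ⟨by omega, by omega⟩
  have hstep : w (p + 1) ≤ w p + 1 := hcat p (by omega)
  refine ⟨p, hpj', by omega, by omega, fun t ht ht' => hand t (by omega) ht'⟩

/-- no mark strictly between a descent's mark and the descent -/
lemma no_mrk_between (hw : IsCatalanWord n w) {j p : ℕ} (hj : Dsc n w j)
    (h1 : p < j) (h2 : w (p + 1) = w p + 1) (h3 : w p = w (j + 1))
    (h4 : ∀ t, p < t → t < j → ¬ Dsc n w t) :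
    ∀ t, p < t → t < j → ¬ Mrk n w t := by
  have hjn : j + 1 < n := hj.1
  rintro t ht1 ht2 ⟨htn, htu, j', hdj', htj', hwj', hnd'⟩
  rcases lt_trichotomy j' j with h | h | h
  · exact h4 j' (by omega) h hdj'
  · subst h
    have : t = p := up_bottom_unique hw ht2 h1 (by omega) htu h2 (by omega)
      hnd' h4
    omega
  · exact hnd' j (by omega) h hj

/-- parity of ranks: the mark of a descent has even rank, and the descent's
rank is one more -/
lemma dsc_parity (hw : IsCatalanWord n w) (hf : IsFlattened n w) :
    ∀ j, Dsc n w j → ∀ p, p < j → w (p + 1) = w p + 1 → w p = w (j + 1) →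
      (∀ t, p < t → t < j → ¬ Dsc n w t) →
      Even (rk (cd n w) p) ∧ rk (cd n w) j = rk (cd n w) p + 1 := by
  intro j
  induction j using Nat.strong_induction_on with
  | _ j ih =>
    intro hj p h1 h2 h3 h4
    have hw0 := hw.1
    have hjn : j + 1 < n := hj.1
    have hmrkp : Mrk n w p := ⟨by omega, h2, j, hj, h1, h3.symm, h4⟩
    have hcp2 : cd n w p = 2 := (cd_eq_two_iff p).2 (Or.inr hmrkp)
    have hnospec : ∀ t, p < t → t < j → cd n w t ≠ 2 := by
      intro t ht1 ht2 hc
      rcases (cd_eq_two_iff t).1 hc with h | h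
      · exact h4 t ht1 ht2 h
      · exact no_mrk_between hw hj h1 h2 h3 h4 t ht1 ht2 h
    have hrkj : rk (cd n w) j = rk (cd n w) p + 1 := by
      have e1 : rk (cd n w) j = rk (cd n w) (p + 1) :=
        rk_const _ (by omega) (fun t ht ht' => hnospec t (by omega) ht')
      rw [e1, rk_succ, if_pos hcp2]
    -- no descent strictly between p and j, and p itself is not a descent
    have hpnotdsc : ¬ Dsc n w p := by
      rintro ⟨_, hlt⟩; omega
    by_cases hq : ∃ t, t < j ∧ Dsc n w t
    · obtain ⟨t0, ht0, hdt0⟩ := hq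
      have hj1 : 1 ≤ j := by omega
      set q := Nat.findGreatest (fun t => Dsc n w t) (j - 1) with hqdef
      have hdq : Dsc n w q := Nat.findGreatest_spec (by omega : t0 ≤ j - 1) hdt0
      have hqj : q ≤ j - 1 := Nat.findGreatest_le _
      have hqmax : ∀ t, q < t → t < j → ¬ Dsc n w t := fun t ha hb =>
        Nat.findGreatest_is_greatest ha (by omega)
      have hqp : q < p := by
        rcases lt_trichotomy q p with h | h | h
        · exact h
        · exact absurd hdq (h ▸ hpnotdsc)
        · exact absurd hdq (h4 q h (by omega))
      -- no special in (q, p)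
      have hnospec2 : ∀ t, q < t → t < p → cd n w t ≠ 2 := by
        intro t ht1 ht2 hc
        rcases (cd_eq_two_iff t).1 hc with h | h
        · exact hqmax t ht1 (by omega) h
        · obtain ⟨htn, htu, j', hdj', htj', hwj', hnd'⟩ := h
          rcases lt_trichotomy j' j with h' | h' | h'
          · exact hqmax j' (by omega) h' hdj'
          · subst h'
            have : t = p := up_bottom_unique hw (by omega) h1 (by omega) htu h2
              (by omega) hnd' h4
            omega
          · exact hnd' j (by omega) h' hj
      have hcq2 : cd n w q = 2 := (cd_eq_two_iff q).2 (Or.inl hdq)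
      have e2 : rk (cd n w) p = rk (cd n w) q + 1 := by
        have e2' : rk (cd n w) p = rk (cd n w) (q + 1) :=
          rk_const _ (by omega) (fun t ht ht' => hnospec2 t (by omega) ht')
        rw [e2', rk_succ, if_pos hcq2]
      obtain ⟨p', hp1, hp2, hp3, hp4⟩ := mark_exists hw hf hdq
      obtain ⟨hev, hrk⟩ := ih q (by omega) hdq p' hp1 hp2 hp3 hp4
      constructor
      · rw [e2, hrk]
        rcases hev with ⟨m, hm⟩
        exact ⟨m + 1, by omega⟩
      · exact hrkj
    · push_neg at hq
      have hnospec0 : ∀ t, t < p → cd n w t ≠ 2 := by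
        intro t ht hc
        rcases (cd_eq_two_iff t).1 hc with h | h
        · exact hq t (by omega) h
        · obtain ⟨htn, htu, j', hdj', htj', hwj', hnd'⟩ := h
          rcases lt_trichotomy j' j with h' | h' | h'
          · exact hq j' h' hdj'
          · subst h'
            have : t = p := up_bottom_unique hw (by omega) h1 (by omega) htu h2
              (by omega) hnd' h4
            omega
          · exact hnd' j (by omega) h' hj
      have e0 : rk (cd n w) p = 0 := by
        have := rk_const (cd n w) (Nat.zero_le p) (fun t ht ht' => hnospec0 t ht')
        rw [this, rk_zero]
      exact ⟨by rw [e0]; exact Even.zero, hrkj⟩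

end WordToCode

section Reconstruct

variable {n k : ℕ} {w : ℕ → ℕ}

lemma dsc_odd (hw : IsCatalanWord n w) (hf : IsFlattened n w) {j : ℕ}
    (hj : Dsc n w j) : Odd (rk (cd n w) j) := by
  obtain ⟨p, h1, h2, h3, h4⟩ := mark_exists hw hf hj
  obtain ⟨hev, hrk⟩ := dsc_parity hw hf j hj p h1 h2 h3 h4
  rw [hrk]
  exact hev.add_one

lemma mrk_even (hw : IsCatalanWord n w) (hf : IsFlattened n w) {i : ℕ}
    (hm : Mrk n w i) : Even (rk (cd n w) i) := by
  obtain ⟨hin, hu, j, hdj, hij, hwj, hnd⟩ := hm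
  exact (dsc_parity hw hf j hdj i hij hu hwj.symm hnd).1

lemma cd_eq_one (h1 : ¬ (Dsc n w i ∨ Mrk n w i)) (h3 : i + 1 < n ∧ w (i + 1) = w i + 1) :
    cd n w i = 1 := by
  unfold cd; rw [if_neg h1, if_pos h3]

lemma cd_eq_zero (h1 : ¬ (Dsc n w i ∨ Mrk n w i)) (h3 : ¬ (i + 1 < n ∧ w (i + 1) = w i + 1)) :
    cd n w i = 0 := by
  unfold cd; rw [if_neg h1, if_neg h3]

lemma cd_reconstruct (hw : IsCatalanWord n w) (hf : IsFlattened n w) :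
    ∀ i, i < n → bw (cd n w) i = w i ∧
      ((bb (cd n w) i = 0 ∧ ∀ t, t < i → ¬ Mrk n w t) ∨
       (∃ p, p < i ∧ Mrk n w p ∧ w p = bb (cd n w) i ∧
          ∀ t, p < t → t < i → ¬ Mrk n w t)) := by
  intro i
  induction i with
  | zero =>
    intro _
    refine ⟨by rw [bw_zero, hw.1], Or.inl ⟨bb_zero _, fun t ht => absurd ht (by omega)⟩⟩
  | succ i ihh =>
    intro h
    obtain ⟨ih1, ih2⟩ := ihh (by omega)
    by_cases hD : Dsc n w i
    · have hc2 : cd n w i = 2 := (cd_eq_two_iff i).2 (Or.inl hD)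
      have ho : Odd (rk (cd n w) i) := dsc_odd hw hf hD
      obtain ⟨e1, e2⟩ := step_spec_odd (cd n w) hc2 ho
      obtain ⟨p, hp1, hp2, hp3, hp4⟩ := mark_exists hw hf hD
      have hmrkp : Mrk n w p := ⟨by have := hD.1; omega, hp2, i, hD, hp1, hp3.symm, hp4⟩
      have hbb : bb (cd n w) i = w p := by
        rcases ih2 with ⟨_, hnone⟩ | ⟨p', h1', hm', hw', hmax'⟩
        · exact absurd hmrkp (hnone p hp1)
        · have hpp : p' = p := by
            rcases lt_trichotomy p' p with hlt | heq | hgt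
            · exact absurd hmrkp (hmax' p hlt hp1)
            · exact heq
            · exact absurd hm'
                (no_mrk_between hw hD hp1 hp2 hp3 hp4 p' hgt h1')
          rw [← hw', hpp]
      constructor
      · rw [e1, hbb, hp3]
      · refine Or.inr ⟨p, by omega, hmrkp, by rw [e2, hbb], fun t ht1 ht2 => ?_⟩
        rcases Nat.lt_or_ge t i with h' | h'
        · exact no_mrk_between hw hD hp1 hp2 hp3 hp4 t ht1 h'
        · have : t = i := by omega
          subst this
          exact dsc_not_mrk hD
    · by_cases hM : Mrk n w i
      · have hc2 : cd n w i = 2 := (cd_eq_two_iff i).2 (Or.inr hM)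
        have he : Even (rk (cd n w) i) := mrk_even hw hf hM
        obtain ⟨e1, e2⟩ := step_spec_even (cd n w) hc2 he
        constructor
        · rw [e1, ih1, hM.2.1]
        · exact Or.inr ⟨i, by omega, hM, by rw [e2, ih1], fun t ht1 ht2 => by omega⟩
      · have hc2 : cd n w i ≠ 2 := by
          intro hc
          rcases (cd_eq_two_iff i).1 hc with h' | h'
          · exact hD h'
          · exact hM h'
        have hext : ∀ t, t < i + 1 → ¬ Mrk n w t → True := fun _ _ _ => trivial
        by_cases hU : w (i + 1) = w i + 1
        · have hc1 : cd n w i = 1 := cd_eq_one (by tauto) ⟨h, hU⟩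
          obtain ⟨e1, e2⟩ := step_one (cd n w) hc2 hc1
          refine ⟨by rw [e1, ih1, hU], ?_⟩
          rcases ih2 with ⟨hz, hnone⟩ | ⟨p', h1', hm', hw', hmax'⟩
          · refine Or.inl ⟨by rw [e2, hz], fun t ht => ?_⟩
            rcases Nat.lt_or_ge t i with h' | h'
            · exact hnone t h'
            · have : t = i := by omega
              subst this; exact hM
          · refine Or.inr ⟨p', by omega, hm', by rw [e2, ← hw'], fun t ht1 ht2 => ?_⟩
            rcases Nat.lt_or_ge t i with h' | h'
            · exact hmax' t ht1 h'
            · have : t = i := by omega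
              subst this; exact hM
        · have hflat : w (i + 1) = w i := by
            have hle : w (i + 1) ≤ w i + 1 := hw.2.1 i h
            have hge : ¬ (w (i + 1) < w i) := fun hlt => hD ⟨h, hlt⟩
            omega
          have hc0 : cd n w i = 0 := cd_eq_zero (by tauto) (by tauto)
          obtain ⟨e1, e2⟩ := step_zero (cd n w) hc2 (by omega)
          refine ⟨by rw [e1, ih1, hflat], ?_⟩
          rcases ih2 with ⟨hz, hnone⟩ | ⟨p', h1', hm', hw', hmax'⟩
          · refine Or.inl ⟨by rw [e2, hz], fun t ht => ?_⟩
            rcases Nat.lt_or_ge t i with h' | h'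
            · exact hnone t h'
            · have : t = i := by omega
              subst this; exact hM
          · refine Or.inr ⟨p', by omega, hm', by rw [e2, ← hw'], fun t ht1 ht2 => ?_⟩
            rcases Nat.lt_or_ge t i with h' | h'
            · exact hmax' t ht1 h'
            · have : t = i := by omega
              subst this; exact hM

lemma cd_wd (hw : IsCatalanWord n w) (hf : IsFlattened n w) : wd n (cd n w) = w := by
  funext i
  by_cases hi : i < n
  · rw [wd, if_pos hi, (cd_reconstruct hw hf i hi).1]
  · rw [wd, if_neg hi, hw.2.2 i (by omega)]

lemma split_card (n : ℕ) (w : ℕ → ℕ) :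
    ((range (n - 1)).filter fun i => w i ≤ w (i + 1)).card
      + ((range (n - 1)).filter fun i => w (i + 1) < w i).card = n - 1 := by
  have hneg : ((range (n - 1)).filter fun i => w (i + 1) < w i)
      = (range (n - 1)).filter fun i => ¬ (w i ≤ w (i + 1)) := by
    apply Finset.filter_congr; intro i _; exact Nat.not_le.symm
  rw [hneg, Finset.card_filter_add_card_filter_not, Finset.card_range]

lemma desc_filter_card (hn : 1 ≤ n) (hruns : runsDesc n w = k) :
    ((range (n - 1)).filter fun i => w (i + 1) < w i).card = n - k
      ∧ 1 ≤ k ∧ k ≤ n := by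
  have h1 : k = 1 + ((range (n - 1)).filter fun i => w i ≤ w (i + 1)).card := by
    rw [← hruns, runsDesc, ncard_setOf]
  have h2 := split_card n w
  omega

open Classical in
lemma cd_card (hn : 1 ≤ n) (hw : IsCatalanWord n w) (hf : IsFlattened n w)
    (hruns : runsDesc n w = k) :
    ((range (n - 1)).filter fun i => cd n w i = 2).card = 2 * (n - k) := by
  classical
  obtain ⟨hdesc, hk1, hkn⟩ := desc_filter_card hn hruns
  have hDs : ((range (n - 1)).filter fun i => Dsc n w i)
      = (range (n - 1)).filter fun i => w (i + 1) < w i := by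
    apply Finset.filter_congr
    intro i hi
    rw [Finset.mem_range] at hi
    unfold Dsc
    constructor
    · rintro ⟨_, h⟩; exact h
    · intro h; exact ⟨by omega, h⟩
  have h2 : ((range (n - 1)).filter fun i => cd n w i = 2)
      = ((range (n - 1)).filter fun i => Dsc n w i)
        ∪ ((range (n - 1)).filter fun i => Mrk n w i) := by
    rw [← Finset.filter_or]
    exact Finset.filter_congr fun i _ => cd_eq_two_iff i
  have hdisj : Disjoint ((range (n - 1)).filter fun i => Dsc n w i)
      ((range (n - 1)).filter fun i => Mrk n w i) := by
    rw [Finset.disjoint_left]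
    intro a ha hb
    exact dsc_not_mrk (Finset.mem_filter.1 ha).2 (Finset.mem_filter.1 hb).2
  have hbij : ((range (n - 1)).filter fun i => Mrk n w i).card
      = ((range (n - 1)).filter fun i => Dsc n w i).card := by
    apply Finset.card_bij
      (fun a _ => if h : Mrk n w a then Classical.choose h.2.2 else 0)
    · intro a ha
      have hma : Mrk n w a := (Finset.mem_filter.1 ha).2
      rw [dif_pos hma]
      obtain ⟨hdj, hij, hwj, hnd⟩ := Classical.choose_spec hma.2.2
      exact Finset.mem_filter.2 ⟨Finset.mem_range.2 (by have := hdj.1; omega), hdj⟩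
    · intro a1 ha1 a2 ha2 heq
      have hm1 : Mrk n w a1 := (Finset.mem_filter.1 ha1).2
      have hm2 : Mrk n w a2 := (Finset.mem_filter.1 ha2).2
      rw [dif_pos hm1, dif_pos hm2] at heq
      obtain ⟨hdj1, hij1, hwj1, hnd1⟩ := Classical.choose_spec hm1.2.2
      obtain ⟨hdj2, hij2, hwj2, hnd2⟩ := Classical.choose_spec hm2.2.2
      rw [heq] at hij1 hwj1 hnd1 hdj1
      exact up_bottom_unique hw hij1 hij2 (by have := hdj2.1; omega) hm1.2.1 hm2.2.1
        (by omega) hnd1 hnd2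
    · intro j hj
      have hdj : Dsc n w j := (Finset.mem_filter.1 hj).2
      obtain ⟨p, hp1, hp2, hp3, hp4⟩ := mark_exists hw hf hdj
      have hmrkp : Mrk n w p := ⟨by have := hdj.1; omega, hp2, j, hdj, hp1, hp3.symm, hp4⟩
      refine ⟨p, Finset.mem_filter.2 ⟨Finset.mem_range.2 (by have := hdj.1; omega), hmrkp⟩, ?_⟩
      rw [dif_pos hmrkp]
      obtain ⟨hdj0, hij0, hwj0, hnd0⟩ := Classical.choose_spec hmrkp.2.2
      set j0 := Classical.choose hmrkp.2.2
      rcases lt_trichotomy j0 j with h' | h' | h'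
      · exact absurd hdj0 (hp4 j0 hij0 h')
      · exact h'
      · exact absurd hdj (hnd0 j hp1 h')
  rw [h2, Finset.card_union_of_disjoint hdisj, hDs, hbij, hDs, hdesc]
  omega

lemma cd_mem_codes (hn : 1 ≤ n) (hw : IsCatalanWord n w) (hf : IsFlattened n w)
    (hruns : runsDesc n w = k) : cd n w ∈ Codes (n - 1) (2 * (n - k)) :=
  ⟨fun i _ => cd_values i, fun i hi => cd_big i (by omega), cd_card hn hw hf hruns⟩

end Reconstruct

section CodeRecover

variable {n d : ℕ} {c : ℕ → ℕ}

lemma rk_top {N r : ℕ} (hc : c ∈ Codes N r) {M : ℕ} (hM : N ≤ M) : rk c M = r := by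
  obtain ⟨hle, hzero, hcard⟩ := hc
  have h1 : rk c M = rk c N := rk_const c hM (fun t ht _ => by rw [hzero t ht]; omega)
  rw [h1]; exact hcard

lemma next_spec (hc : c ∈ Codes (n - 1) (2 * d)) {i : ℕ} (hi : i < n - 1)
    (h2 : c i = 2) (he : Even (rk c i)) :
    ∃ j, i < j ∧ j < n - 1 ∧ c j = 2 ∧ (∀ t, i < t → t < j → c t ≠ 2) ∧ Odd (rk c j) := by
  have hro : Odd (rk c (i + 1)) := by rw [rk_succ, if_pos h2]; exact he.add_one
  have hex : ∃ t, i < t ∧ c t = 2 := by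
    by_contra hne
    push_neg at hne
    have : rk c (n - 1) = rk c (i + 1) :=
      rk_const c (by omega) (fun t ht _ => hne t (by omega))
    have htop : rk c (n - 1) = 2 * d := rk_top hc le_rfl
    rcases hro with ⟨m, hm⟩
    omega
  set j := Nat.find hex with hjdef
  obtain ⟨hij, hj2⟩ : i < j ∧ c j = 2 := Nat.find_spec hex
  have hmin : ∀ t, t < j → ¬ (i < t ∧ c t = 2) := fun t ht => Nat.find_min hex ht
  have hjN : j < n - 1 := by
    by_contra hge
    rw [hc.2.1 j (by omega)] at hj2
    omega
  refine ⟨j, hij, hjN, hj2, fun t ht1 ht2 => fun hct => hmin t ht2 ⟨ht1, hct⟩, ?_⟩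
  have : rk c j = rk c (i + 1) :=
    rk_const c (by omega) (fun t ht htj => fun hct => hmin t htj ⟨by omega, hct⟩)
  rw [this]; exact hro

lemma wd_cd (hn : 1 ≤ n) (hc : c ∈ Codes (n - 1) (2 * d)) : cd n (wd n c) = c := by
  funext i
  by_cases hiN : i < n - 1
  case neg =>
    rw [cd_big i (by omega), hc.2.1 i (by omega)]
  case pos =>
  have hi1 : i + 1 < n := by omega
  have hvle := hc.1 i hiN
  have hwdi : wd n c i = bw c i := wd_lt hn (by omega)
  have hwdi1 : wd n c (i + 1) = bw c (i + 1) := wd_lt hn hi1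
  rcases Nat.lt_or_ge (c i) 2 with hlt | hge
  · -- c i = 0 or 1
    have hc2 : c i ≠ 2 := by omega
    rcases Nat.lt_or_ge (c i) 1 with hlt0 | hge1
    · -- c i = 0 : flat step
      have hc0 : c i = 0 := by omega
      obtain ⟨e1, _⟩ := step_zero c hc2 (by omega)
      have hnd : ¬ Dsc n (wd n c) i := by
        rintro ⟨_, hdd⟩; rw [hwdi, hwdi1, e1] at hdd; omega
      have hnu : ¬ (i + 1 < n ∧ wd n c (i + 1) = wd n c i + 1) := by
        rintro ⟨_, huu⟩; rw [hwdi, hwdi1, e1] at huu; omega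
      have hnm : ¬ Mrk n (wd n c) i := by
        rintro ⟨hh1, hh2, _⟩; exact hnu ⟨hh1, hh2⟩
      rw [cd_eq_zero (by tauto) hnu, hc0]
    · -- c i = 1 : free up-step, must not be a mark
      have hc1 : c i = 1 := by omega
      obtain ⟨e1, _⟩ := step_one c hc2 hc1
      have hnd : ¬ Dsc n (wd n c) i := by
        rintro ⟨_, hdd⟩; rw [hwdi, hwdi1, e1] at hdd; omega
      have hnm : ¬ Mrk n (wd n c) i := by
        rintro ⟨_, hup, j, hdj, hij, hwj, hndj⟩
        have hjn : j + 1 < n := hdj.1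
        have hjN : j < n - 1 := by omega
        have hdj' : c j = 2 ∧ Odd (rk c j) := by
          have := hdj.2
          rw [wd_lt hn (by omega), wd_lt hn (by omega)] at this
          exact (bw_desc_iff c j).1 this
        -- find the previous special, which is a mark
        have hexp : ∃ t, t < j ∧ c t = 2 := by
          by_contra hne
          push_neg at hne
          have h0 : rk c j = rk c 0 := rk_const c (Nat.zero_le j)
            (fun t _ ht => hne t ht)
          rw [rk_zero] at h0
          rcases hdj'.2 with ⟨m, hm⟩
          omega
        obtain ⟨t0, ht0, hct0⟩ := hexp
        have hj1 : 1 ≤ j := by omega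
        set p := Nat.findGreatest (fun t => c t = 2) (j - 1) with hpdef
        have hcp : c p = 2 := Nat.findGreatest_spec (P := fun t => c t = 2) (by omega : t0 ≤ j - 1) hct0
        have hpj : p ≤ j - 1 := Nat.findGreatest_le _
        have hpmax : ∀ t, p < t → t < j → c t ≠ 2 := fun t hh1 hh2 =>
          Nat.findGreatest_is_greatest (P := fun t => c t = 2) (n := j - 1) hh1 (by omega)
        have hrkj : rk c j = rk c p + 1 := by
          have e2 : rk c j = rk c (p + 1) :=
            rk_const c (by omega) (fun t ht ht' => hpmax t (by omega) ht')
          rw [e2, rk_succ, if_pos hcp]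
        have hpe : Even (rk c p) := by
          rcases Nat.even_or_odd (rk c p) with h | h
          · exact h
          · exfalso; rcases h with ⟨m, hm⟩; rcases hdj'.2 with ⟨m', hm'⟩; omega
        obtain ⟨f1, f2⟩ := step_spec_even c hcp hpe
        have hbbj : bb c j = bw c p := by
          have : bb c j = bb c (p + 1) :=
            bb_const_of_no_spec c (by omega) (fun t ht ht' => hpmax t (by omega) ht')
          rw [this, f2]
        obtain ⟨g1, _⟩ := step_spec_odd c hdj'.1 hdj'.2
        -- value of the word after the descent
        have hval : bw c p = bw c i := by
          have := hwj
          rw [wd_lt hn (by omega), hwdi, g1, hbbj] at this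
          exact this
        have hnd2 : ∀ t, i < t → t < j → ¬ (c t = 2 ∧ Odd (rk c t)) := by
          intro t hh1 hh2 hcc
          have : Dsc n (wd n c) t := by
            refine ⟨by omega, ?_⟩
            rw [wd_lt hn (by omega), wd_lt hn (by omega)]
            exact (bw_desc_iff c t).2 hcc
          exact hndj t hh1 hh2 this
        rcases lt_trichotomy p i with hpi | hpi | hpi
        · -- p < i : word strictly above bottom from p+1 on
          have hmono : bw c (p + 1) ≤ bw c i := bw_mono_of_no_desc c (by omega)
            (fun t ht ht' => fun hcc => hpmax t (by omega) (by omega) hcc.1)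
          omega
        · rw [hpi] at hcp; omega
        · -- i < p : w p is strictly above w i
          have hmono : bw c (i + 1) ≤ bw c p := bw_mono_of_no_desc c (by omega)
            (fun t ht ht' => hnd2 t (by omega) (by omega))
          omega
      have hup : i + 1 < n ∧ wd n c (i + 1) = wd n c i + 1 := by
        refine ⟨hi1, ?_⟩; rw [hwdi, hwdi1, e1]
      rw [cd_eq_one (by tauto) hup, hc1]
  · -- c i = 2
    have hc2 : c i = 2 := by omega
    rcases Nat.even_or_odd (rk c i) with he | ho
    · -- an even special is a mark of the built word
      obtain ⟨e1, e2⟩ := step_spec_even c hc2 he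
      obtain ⟨j, hij, hjN, hj2, hnos, hjo⟩ := next_spec hc hiN hc2 he
      obtain ⟨g1, _⟩ := step_spec_odd c hj2 hjo
      have hdj : Dsc n (wd n c) j := by
        refine ⟨by omega, ?_⟩
        rw [wd_lt hn (by omega), wd_lt hn (by omega)]
        exact (bw_desc_iff c j).2 ⟨hj2, hjo⟩
      have hmm : Mrk n (wd n c) i := by
        refine ⟨hi1, by rw [hwdi, hwdi1, e1], j, hdj, hij, ?_, ?_⟩
        · rw [wd_lt hn (by omega), hwdi, g1]
          have : bb c j = bb c (i + 1) :=
            bb_const_of_no_spec c (by omega) (fun t ht ht' => hnos t (by omega) ht')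
          rw [this, e2]
        · intro t ht1 ht2
          rintro ⟨_, hdd⟩
          rw [wd_lt hn (by omega), wd_lt hn (by omega)] at hdd
          exact hnos t ht1 ht2 ((bw_desc_iff c t).1 hdd).1
      rw [(cd_eq_two_iff i).2 (Or.inr hmm), hc2]
    · -- an odd special is a descent of the built word
      have hdd : Dsc n (wd n c) i := by
        refine ⟨hi1, ?_⟩
        rw [hwdi, hwdi1]
        exact (bw_desc_iff c i).2 ⟨hc2, ho⟩
      rw [(cd_eq_two_iff i).2 (Or.inl hdd), hc2]

end CodeRecover

section Counting

/-- data parametrizing a code: the set of special positions and a boolean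
choice for each non-special position -/
def codeOf {N : ℕ} (s : Finset ℕ) (f : {x // x ∈ range N \ s} → Bool) : ℕ → ℕ :=
  fun i => if h : i ∈ range N then
    (if h2 : i ∈ s then 2
     else if f ⟨i, Finset.mem_sdiff.2 ⟨h, h2⟩⟩ then 1 else 0)
  else 0


lemma codeOf_mem {N r : ℕ} {s : Finset ℕ} (hs : s ∈ (range N).powersetCard r)
    (f : {x // x ∈ range N \ s} → Bool) : codeOf s f ∈ Codes N r := by
  obtain ⟨hsub, hcard⟩ := Finset.mem_powersetCard.1 hs
  refine ⟨fun i hi => ?_, fun i hi => ?_, ?_⟩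
  · unfold codeOf
    split
    · split
      · omega
      · split <;> omega
    · omega
  · unfold codeOf
    rw [dif_neg (by simp; omega)]
  · have : (range N).filter (fun i => codeOf s f i = 2) = s := by
      ext i
      simp only [Finset.mem_filter, Finset.mem_range]
      constructor
      · rintro ⟨hiN, hval⟩
        unfold codeOf at hval
        rw [dif_pos (Finset.mem_range.2 hiN)] at hval
        by_contra his
        rw [dif_neg his] at hval
        split at hval <;> omega
      · intro his
        have hiN : i ∈ range N := hsub his
        refine ⟨Finset.mem_range.1 hiN, ?_⟩
        unfold codeOf
        rw [dif_pos hiN, dif_pos his]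
    rw [this, hcard]

lemma codes_ncard (N r : ℕ) :
    Nat.card (Codes N r) = N.choose r * 2 ^ (N - r) := by
  rcases Nat.lt_or_ge N r with hNr | hNr
  · have hempty : Codes N r = ∅ := by
      ext c
      simp only [Set.mem_empty_iff_false, iff_false]
      rintro ⟨_, _, hcard⟩
      have : ((range N).filter fun i => c i = 2).card ≤ N := by
        calc ((range N).filter fun i => c i = 2).card ≤ (range N).card :=
              Finset.card_le_card (Finset.filter_subset _ _)
          _ = N := Finset.card_range N
      omega
    rw [hempty, Nat.choose_eq_zero_of_lt hNr]
    simp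
  · set T := Σ s : {s // s ∈ (range N).powersetCard r}, ({x // x ∈ range N \ s.1} → Bool)
      with hT
    set F : T → Codes N r := fun p => ⟨codeOf p.1.1 p.2, codeOf_mem p.1.2 p.2⟩ with hFdef
    have hF : Function.Bijective F := by
      constructor
      · rintro ⟨⟨s, hs⟩, f⟩ ⟨⟨s', hs'⟩, f'⟩ heq
        have hval : codeOf s f = codeOf s' f' := congrArg Subtype.val heq
        obtain ⟨hsub, hcard⟩ := Finset.mem_powersetCard.1 hs
        obtain ⟨hsub', hcard'⟩ := Finset.mem_powersetCard.1 hs'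
        have hss : s = s' := by
          ext i
          constructor
          · intro hi
            have hiN : i ∈ range N := hsub hi
            have h2 : codeOf s f i = 2 := by unfold codeOf; rw [dif_pos hiN, dif_pos hi]
            rw [hval] at h2
            by_contra his
            unfold codeOf at h2
            rw [dif_pos hiN, dif_neg his] at h2
            split at h2 <;> omega
          · intro hi
            have hiN : i ∈ range N := hsub' hi
            have h2 : codeOf s' f' i = 2 := by unfold codeOf; rw [dif_pos hiN, dif_pos hi]
            rw [← hval] at h2
            by_contra his
            unfold codeOf at h2
            rw [dif_pos hiN, dif_neg his] at h2
            split at h2 <;> omega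
        subst hss
        have hff : f = f' := by
          funext x
          rcases x with ⟨i, hi⟩
          obtain ⟨hiN, his⟩ := Finset.mem_sdiff.1 hi
          have := congrFun hval i
          unfold codeOf at this
          rw [dif_pos hiN, dif_pos hiN, dif_neg his, dif_neg his] at this
          rcases hb : f ⟨i, hi⟩ with _ | _ <;> rcases hb' : f' ⟨i, hi⟩ with _ | _
          · rfl
          · rw [if_neg (by simp [hb]), if_pos (by simp [hb'])] at this; omega
          · rw [if_pos (by simp [hb]), if_neg (by simp [hb'])] at this; omega
          · rfl
        rw [hff]
      · rintro ⟨c, hc⟩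
        obtain ⟨hle, hzero, hcard⟩ := hc
        set s := (range N).filter (fun i => c i = 2) with hsdef
        have hs : s ∈ (range N).powersetCard r :=
          Finset.mem_powersetCard.2 ⟨Finset.filter_subset _ _, hcard⟩
        refine ⟨⟨⟨s, hs⟩, fun x => decide (c x.1 = 1)⟩, ?_⟩
        apply Subtype.ext
        funext i
        show codeOf s _ i = c i
        unfold codeOf
        by_cases hiN : i ∈ range N
        · rw [dif_pos hiN]
          by_cases his : i ∈ s
          · rw [dif_pos his]
            exact ((Finset.mem_filter.1 his).2).symm
          · rw [dif_neg his]
            have hc2 : c i ≠ 2 := fun hcc => his (Finset.mem_filter.2 ⟨hiN, hcc⟩)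
            have hle2 : c i ≤ 2 := hle i (Finset.mem_range.1 hiN)
            rcases Nat.lt_or_ge (c i) 1 with h0 | h1
            · rw [if_neg (by simp; omega)]; omega
            · have : c i = 1 := by omega
              rw [if_pos (by simp [this])]; omega
        · rw [dif_neg hiN]
          rw [hzero i (by simp only [Finset.mem_range, not_lt] at hiN; exact hiN)]
    rw [← Nat.card_eq_of_bijective F hF, Nat.card_eq_fintype_card, Fintype.card_sigma]
    have hconst : ∀ s : {s // s ∈ (range N).powersetCard r},
        Fintype.card ({x // x ∈ range N \ s.1} → Bool) = 2 ^ (N - r) := by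
      rintro ⟨s, hs⟩
      obtain ⟨hsub, hcard⟩ := Finset.mem_powersetCard.1 hs
      rw [Fintype.card_fun, Fintype.card_bool, Fintype.card_coe,
        Finset.card_sdiff_of_subset hsub, Finset.card_range, hcard]
    rw [Finset.sum_congr rfl (fun s _ => hconst s), Finset.sum_const, smul_eq_mul,
      Finset.card_univ, Fintype.card_coe, Finset.card_powersetCard, Finset.card_range]

end Counting

lemma master (n k : ℕ) (hn : 1 ≤ n) (hk : 1 ≤ k) (hkn : k ≤ n) :
    {w ∈ FlatCat n | runsDesc n w = k}.ncard
      = (n - 1).choose (2 * (n - k)) * 2 ^ ((n - 1) - 2 * (n - k)) := by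
  set S := {w ∈ FlatCat n | runsDesc n w = k} with hS
  set F : Codes (n - 1) (2 * (n - k)) → S := fun c =>
    ⟨wd n c.1, ⟨⟨wd_isCatalan hn, wd_isFlattened hn⟩, wd_runsDesc hn hk hkn c.2⟩⟩ with hF
  have hbij : Function.Bijective F := by
    constructor
    · rintro ⟨c, hc⟩ ⟨c', hc'⟩ heq
      have hval : wd n c = wd n c' := congrArg Subtype.val heq
      apply Subtype.ext
      calc c = cd n (wd n c) := (wd_cd hn hc).symm
        _ = cd n (wd n c') := by rw [hval]
        _ = c' := wd_cd hn hc'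
    · rintro ⟨w, hw⟩
      obtain ⟨⟨hcat, hflat⟩, hruns⟩ := hw
      refine ⟨⟨cd n w, cd_mem_codes hn hcat hflat hruns⟩, ?_⟩
      exact Subtype.ext (cd_wd hcat hflat)
  rw [← Nat.card_coe_set_eq, ← Nat.card_eq_of_bijective F hbij, codes_ncard]

end FCW

/-- For `n ≥ 1` and `k` with `2k ≥ n + 1` and `k ≤ n`, the number of flattened
Catalan words of length `n` with exactly `k` runs of descents equals
`2^(2k - n - 1) * C(n - 1, 2(n - k))`; it is `0` when `2k < n + 1`. -/
theorem flatCat_runsDesc_card (n k : ℕ) (hn : 1 ≤ n) :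
    (n + 1 ≤ 2 * k → k ≤ n →
      {w ∈ FlatCat n | runsDesc n w = k}.ncard =
        2 ^ (2 * k - n - 1) * Nat.choose (n - 1) (2 * (n - k))) ∧
    (2 * k < n + 1 → {w ∈ FlatCat n | runsDesc n w = k}.ncard = 0) := by
  constructor
  · intro h1 h2
    rw [FCW.master n k hn (by omega) h2]
    have he : (n - 1) - 2 * (n - k) = 2 * k - n - 1 := by omega
    rw [he, Nat.mul_comm]
  · intro h
    rcases Nat.eq_zero_or_pos k with rfl | hk
    · have hempty : {w ∈ FlatCat n | runsDesc n w = 0} = ∅ := by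
        ext w
        simp only [Set.mem_setOf_eq, Set.mem_empty_iff_false, iff_false, not_and]
        intro _
        rw [runsDesc]
        omega
      rw [hempty]
      exact Set.ncard_empty _
    · rw [FCW.master n k hn hk (by omega)]
      rw [Nat.choose_eq_zero_of_lt (by omega)]
      simp
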